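/- Let f : ℝ^d → ℝ be μ-strongly convex and L-smooth, and let 2/(L+μ) ≤ α < 2/L. Then for all x, y, ‖(x − α∇f(x)) − (y − α∇f(y))‖² ≤ (1 − αL)²‖x − y‖². -/

import Mathlib

open InnerProductSpace Set

section Aux

variable {E : Type*} [NormedAddCommGroup E] [InnerProductSpace ℝ E] [CompleteSpace E]

/-- derivative along a line -/
private lemma stmt4_line_hasDerivAt {F : E → ℝ} {G : E → E} (hF : ∀ x, HasGradientAt F (G x) x)
    (x v : E) (t : ℝ) :
    HasDerivAt (fun s : ℝ => F (x + s • v)) (⟪G (x + t • v), v⟫_ℝ) t := by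
  have hc : HasDerivAt (fun s : ℝ => x + s • v) v t := by
    simpa using ((hasDerivAt_id t).smul_const v).const_add x
  have := ((hF (x + t • v)).hasFDerivAt).comp_hasDerivAt t hc
  simpa [toDual_apply_apply, Function.comp_def] using this

/-- gradient inequality for convex differentiable functions -/
private lemma stmt4_grad_ineq {F : E → ℝ} {G : E → E} (hF : ∀ x, HasGradientAt F (G x) x)
    (hc : ConvexOn ℝ univ F) (x y : E) :
    F x + ⟪G x, y - x⟫_ℝ ≤ F y := by
  set v := y - x
  have hu : ConvexOn ℝ univ (fun t : ℝ => F (x + t • v)) := by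
    have := hc.comp_affineMap (AffineMap.lineMap x y : ℝ →ᵃ[ℝ] E)
    simp only [Set.preimage_univ] at this
    refine ConvexOn.congr this ?_
    intro t _
    simp [AffineMap.lineMap_apply, v]
    abel
  have hd : HasDerivAt (fun s : ℝ => F (x + s • v)) (⟪G (x + (0:ℝ) • v), v⟫_ℝ) 0 :=
    stmt4_line_hasDerivAt hF x v 0
  have := hu.le_slope_of_hasDerivAt (mem_univ (0:ℝ)) (mem_univ (1:ℝ)) one_pos hd
  simp only [slope_def_field, zero_smul, add_zero, one_smul] at this ⊢
  have h1 : x + v = y := by simp [v]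
  rw [h1] at this
  have : ⟪G x, v⟫_ℝ ≤ F y - F x := by simpa [div_one] using this
  linarith

/-- monotone gradient implies convex -/
private lemma stmt4_convex_of_monotone_grad {F : E → ℝ} {G : E → E}
    (hF : ∀ x, HasGradientAt F (G x) x)
    (hm : ∀ a b : E, 0 ≤ ⟪G a - G b, a - b⟫_ℝ) : ConvexOn ℝ univ F := by
  have key : ∀ x v : E, ConvexOn ℝ univ (fun t : ℝ => F (x + t • v)) := by
    intro x v
    have hdiff : Differentiable ℝ (fun t : ℝ => F (x + t • v)) :=
      fun t => (stmt4_line_hasDerivAt hF x v t).differentiableAt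
    apply Monotone.convexOn_univ_of_deriv hdiff
    have hder : ∀ t : ℝ, deriv (fun s : ℝ => F (x + s • v)) t = ⟪G (x + t • v), v⟫_ℝ :=
      fun t => (stmt4_line_hasDerivAt hF x v t).deriv
    intro s t hst
    rw [hder, hder]
    have := hm (x + t • v) (x + s • v)
    have hsub : (x + t • v) - (x + s • v) = (t - s) • v := by module
    rw [hsub, real_inner_smul_right, inner_sub_left] at this
    rcases eq_or_lt_of_le hst with rfl | hlt
    · exact le_refl _
    · nlinarith [this, sub_pos.mpr hlt]
  refine ⟨convex_univ, fun p _ q _ a b ha hb hab => ?_⟩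
  have := (key p (q - p)).2 (mem_univ (0:ℝ)) (mem_univ (1:ℝ)) ha hb hab
  simp only [smul_eq_mul, mul_zero, mul_one, zero_add, zero_smul, add_zero, one_smul] at this
  have h1 : p + (q - p) = q := by abel
  have h2 : p + b • (q - p) = a • p + b • q := by
    have : a = 1 - b := by linarith
    rw [this]; module
  rw [h1, h2] at this
  exact this

/-- co-coercivity from gradient inequality + descent lemma -/
private lemma stmt4_cocoercive {h : E → ℝ} {G : E → E} {K : ℝ} (hK : 0 < K)
    (hgi : ∀ x y : E, h x + ⟪G x, y - x⟫_ℝ ≤ h y)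
    (hdesc : ∀ x y : E, h y ≤ h x + ⟪G x, y - x⟫_ℝ + K / 2 * ‖y - x‖ ^ 2)
    (x y : E) : ‖G x - G y‖ ^ 2 ≤ K * ⟪G x - G y, x - y⟫_ℝ := by
  have main : ∀ p q : E, h p - ⟪G p, p - q⟫_ℝ + 1 / (2 * K) * ‖G p - G q‖ ^ 2 ≤ h q := by
    intro p q
    set e := G p - G q with he
    set z := q + K⁻¹ • e with hz
    have A1 := hgi p z
    have A2 := hdesc q z
    have hz1 : z - p = (q - p) + K⁻¹ • e := by rw [hz]; abel
    have hz2 : z - q = K⁻¹ • e := by rw [hz]; abel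
    rw [hz1] at A1
    rw [hz2] at A2
    rw [inner_add_right, real_inner_smul_right] at A1
    rw [real_inner_smul_right, norm_smul] at A2
    have hip : ⟪G p, e⟫_ℝ - ⟪G q, e⟫_ℝ = ‖e‖ ^ 2 := by
      rw [← inner_sub_left, ← he, real_inner_self_eq_norm_sq]
    have hq : ⟪G p, q - p⟫_ℝ = - ⟪G p, p - q⟫_ℝ := by
      rw [← inner_neg_right]; congr 1; abel
    rw [hq] at A1
    have hKn : ‖(K:ℝ)⁻¹‖ = K⁻¹ := by
      rw [Real.norm_eq_abs, abs_of_pos (inv_pos.mpr hK)]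
    rw [hKn] at A2
    have hexp : K / 2 * (K⁻¹ * ‖e‖) ^ 2 = 1 / (2 * K) * ‖e‖ ^ 2 := by
      field_simp
    rw [hexp] at A2
    have hip2 : K⁻¹ * ⟪G p, e⟫_ℝ - K⁻¹ * ⟪G q, e⟫_ℝ = K⁻¹ * ‖e‖ ^ 2 := by
      rw [← mul_sub, hip]
    have hhalf : K⁻¹ * ‖e‖ ^ 2 - 1 / (2 * K) * ‖e‖ ^ 2 = 1 / (2 * K) * ‖e‖ ^ 2 := by
      field_simp; ring
    linarith [A1, A2, hip2, hhalf]
  have M1 := main x y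
  have M2 := main y x
  have hsym : ‖G y - G x‖ = ‖G x - G y‖ := norm_sub_rev _ _
  have hinner : ⟪G y, y - x⟫_ℝ = - ⟪G y, x - y⟫_ℝ := by
    rw [← inner_neg_right]; congr 1; abel
  rw [hsym] at M2
  rw [hinner] at M2
  have hsum : ⟪G x, x - y⟫_ℝ - ⟪G y, x - y⟫_ℝ = ⟪G x - G y, x - y⟫_ℝ := by
    rw [← inner_sub_left]
  have h2K : 1 / (2 * K) * ‖G x - G y‖ ^ 2 + 1 / (2 * K) * ‖G x - G y‖ ^ 2
      = 1 / K * ‖G x - G y‖ ^ 2 := by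
    rw [← add_mul]; congr 1; field_simp; norm_num
  have hS : 1 / K * ‖G x - G y‖ ^ 2 ≤ ⟪G x - G y, x - y⟫_ℝ := by linarith [M1, M2, hsum, h2K]
  have := mul_le_mul_of_nonneg_left hS hK.le
  have hcan : K * (1 / K * ‖G x - G y‖ ^ 2) = ‖G x - G y‖ ^ 2 := by
    field_simp
  linarith [this, hcan]

/-- gradient of the squared norm -/
private lemma stmt4_hasGradientAt_norm_sq (z : E) :
    HasGradientAt (fun w : E => ‖w‖ ^ 2) ((2:ℝ) • z) z := by
  rw [hasGradientAt_iff_hasFDerivAt]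
  refine ((hasFDerivAt_id z).norm_sq).congr_fderiv ?_
  ext v
  simp [toDual_apply_apply, real_inner_smul_left, two_smul]

/-- gradient of f + c * ‖·‖² -/
private lemma stmt4_grad_combo {F : E → ℝ} {a : E} (c : ℝ) {z : E}
    (h1 : HasGradientAt F a z) :
    HasGradientAt (fun w => c * ‖w‖ ^ 2 + F w) ((2 * c) • z + a) z := by
  rw [hasGradientAt_iff_hasFDerivAt]
  have h2 := (stmt4_hasGradientAt_norm_sq z).hasFDerivAt
  have := (h2.const_smul c).add h1.hasFDerivAt
  refine this.congr_fderiv ?_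
  ext v
  simp [toDual_apply_apply, inner_add_left, real_inner_smul_left]
  ring

/-- gradient of the negative -/
private lemma stmt4_grad_neg {F : E → ℝ} {a : E} {z : E} (h1 : HasGradientAt F a z) :
    HasGradientAt (fun w => -F w) (-a) z := by
  rw [hasGradientAt_iff_hasFDerivAt]
  have := h1.hasFDerivAt.neg
  refine this.congr_fderiv ?_
  simp [map_neg]

end Aux

set_option maxHeartbeats 1000000 in
/-- If `f` is `μ`-strongly convex and `L`-smooth (`0 < μ ≤ L`) and
`2/(L+μ) ≤ α < 2/L`, then the gradient step contracts with factor `(1 − αL)²`. -/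
theorem stmt_4 {d : ℕ} (f : EuclideanSpace ℝ (Fin d) → ℝ)
    (g : EuclideanSpace ℝ (Fin d) → EuclideanSpace ℝ (Fin d))
    (μ L α : ℝ) (hμ : 0 < μ) (hμL : μ ≤ L)
    (hgrad : ∀ x, HasGradientAt f (g x) x)
    (hsc : StrongConvexOn Set.univ μ f)
    (hsmooth : ∀ x y, ‖g x - g y‖ ≤ L * ‖x - y‖)
    (hα0 : 2 / (L + μ) ≤ α) (hα : α < 2 / L)
    (x y : EuclideanSpace ℝ (Fin d)) :
    ‖(x - α • g x) - (y - α • g y)‖ ^ 2 ≤ (1 - α * L) ^ 2 * ‖x - y‖ ^ 2 := by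
  have hL : 0 < L := lt_of_lt_of_le hμ hμL
  have hLμ : 0 < L + μ := by linarith
  -- gradient of φ = f − (μ/2)‖·‖²
  have hGφ : ∀ z, HasGradientAt (fun w => f w - μ / 2 * ‖w‖ ^ 2) (g z - μ • z) z := by
    intro z
    have := stmt4_grad_combo (-(μ/2)) (hgrad z)
    have heq : (2 * -(μ / 2)) • z + g z = g z - μ • z := by module
    rw [heq] at this
    convert this using 1
    funext w; ring
  -- gradient of ψ = (L/2)‖·‖² − f
  have hGψ : ∀ z, HasGradientAt (fun w => L / 2 * ‖w‖ ^ 2 - f w) (L • z - g z) z := by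
    intro z
    have := stmt4_grad_combo (L / 2) (stmt4_grad_neg (hgrad z))
    have heq : (2 * (L / 2)) • z + -g z = L • z - g z := by module
    rw [heq] at this
    convert this using 2
    ring
  -- convexity of φ and ψ
  have hφc : ConvexOn ℝ Set.univ (fun w => f w - μ / 2 * ‖w‖ ^ 2) :=
    strongConvexOn_iff_convex.mp hsc
  have hψmono : ∀ p q : EuclideanSpace ℝ (Fin d),
      0 ≤ ⟪(L • p - g p) - (L • q - g q), p - q⟫_ℝ := by
    intro p q
    have h1 : (L • p - g p) - (L • q - g q) = L • (p - q) - (g p - g q) := by module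
    rw [h1, inner_sub_left, real_inner_smul_left, real_inner_self_eq_norm_sq]
    have hcs : ⟪g p - g q, p - q⟫_ℝ ≤ ‖g p - g q‖ * ‖p - q‖ := real_inner_le_norm _ _
    have hs := hsmooth p q
    nlinarith [norm_nonneg (p - q), norm_nonneg (g p - g q)]
  have hψc : ConvexOn ℝ Set.univ (fun w => L / 2 * ‖w‖ ^ 2 - f w) :=
    stmt4_convex_of_monotone_grad hGψ hψmono
  have hgiφ := stmt4_grad_ineq hGφ hφc
  have hgiψ := stmt4_grad_ineq hGψ hψc
  -- useful identity
  have hid : ∀ p q : EuclideanSpace ℝ (Fin d),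
      ‖q - p‖ ^ 2 = ‖q‖ ^ 2 - ‖p‖ ^ 2 - 2 * ⟪p, q - p⟫_ℝ := by
    intro p q
    rw [norm_sub_sq_real, inner_sub_right, real_inner_self_eq_norm_sq, real_inner_comm]
    ring
  -- strong monotonicity of the gradient
  have hmono : ∀ p q : EuclideanSpace ℝ (Fin d),
      μ * ‖p - q‖ ^ 2 ≤ ⟪g p - g q, p - q⟫_ℝ := by
    intro p q
    have A := hgiφ p q
    have B := hgiφ q p
    have eA : ⟪g p - μ • p, q - p⟫_ℝ = ⟪g p, q - p⟫_ℝ - μ * ⟪p, q - p⟫_ℝ := by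
      rw [inner_sub_left, real_inner_smul_left]
    have eB : ⟪g q - μ • q, p - q⟫_ℝ = ⟪g q, p - q⟫_ℝ - μ * ⟪q, p - q⟫_ℝ := by
      rw [inner_sub_left, real_inner_smul_left]
    rw [eA] at A
    rw [eB] at B
    have e1 : ⟪g p - g q, p - q⟫_ℝ = -⟪g p, q - p⟫_ℝ - ⟪g q, p - q⟫_ℝ := by
      rw [inner_sub_left, show q - p = -(p - q) from by abel, inner_neg_right]
      ring
    have e2 : ‖p - q‖ ^ 2 = -⟪p, q - p⟫_ℝ - ⟪q, p - q⟫_ℝ := by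
      rw [← real_inner_self_eq_norm_sq, inner_sub_left,
        show q - p = -(p - q) from by abel, inner_neg_right, inner_sub_right,
        inner_sub_right, real_inner_comm q p]
      ring
    rw [e1, e2]
    nlinarith [A, B]
  -- key co-coercivity inequality
  have hkey : ∀ p q : EuclideanSpace ℝ (Fin d),
      ‖g p - g q‖ ^ 2 + μ * L * ‖p - q‖ ^ 2 ≤ (L + μ) * ⟪g p - g q, p - q⟫_ℝ := by
    intro p q
    have ha2 : ‖g p - g q‖ ^ 2 ≤ L ^ 2 * ‖p - q‖ ^ 2 := by
      nlinarith [hsmooth p q, norm_nonneg (g p - g q), norm_nonneg (p - q)]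
    rcases eq_or_lt_of_le hμL with hcase | hcase
    · -- μ = L
      have hm := hmono p q
      rw [hcase] at hm ⊢
      nlinarith [mul_le_mul_of_nonneg_left hm (by positivity : (0:ℝ) ≤ 2 * L), ha2]
    · -- μ < L : use co-coercivity of φ with constant L - μ
      have hKpos : 0 < L - μ := by linarith
      have hdesc : ∀ u v : EuclideanSpace ℝ (Fin d),
          f v - μ / 2 * ‖v‖ ^ 2 ≤ f u - μ / 2 * ‖u‖ ^ 2 + ⟪g u - μ • u, v - u⟫_ℝ
            + (L - μ) / 2 * ‖v - u‖ ^ 2 := by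
        intro u v
        have B := hgiψ u v
        have e1 : ⟪L • u - g u, v - u⟫_ℝ = L * ⟪u, v - u⟫_ℝ - ⟪g u, v - u⟫_ℝ := by
          rw [inner_sub_left, real_inner_smul_left]
        have e2 : ⟪g u - μ • u, v - u⟫_ℝ = ⟪g u, v - u⟫_ℝ - μ * ⟪u, v - u⟫_ℝ := by
          rw [inner_sub_left, real_inner_smul_left]
        rw [e1] at B
        rw [e2, hid u v]
        nlinarith [B]
      have hco := stmt4_cocoercive hKpos hgiφ hdesc p q
      have hexp1 : (g p - μ • p) - (g q - μ • q) = (g p - g q) - μ • (p - q) := by module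
      rw [hexp1] at hco
      have hn : ‖(g p - g q) - μ • (p - q)‖ ^ 2
          = ‖g p - g q‖ ^ 2 - 2 * (μ * ⟪g p - g q, p - q⟫_ℝ) + μ ^ 2 * ‖p - q‖ ^ 2 := by
        rw [norm_sub_sq_real, real_inner_smul_right, norm_smul, Real.norm_eq_abs, mul_pow, sq_abs]
      have hi : ⟪(g p - g q) - μ • (p - q), p - q⟫_ℝ
          = ⟪g p - g q, p - q⟫_ℝ - μ * ‖p - q‖ ^ 2 := by
        rw [inner_sub_left, real_inner_smul_left, real_inner_self_eq_norm_sq]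
      rw [hn, hi] at hco
      nlinarith [hco]
  -- put everything together
  have hstep : (x - α • g x) - (y - α • g y) = (x - y) - α • (g x - g y) := by module
  rw [hstep]
  have hnt : ‖(x - y) - α • (g x - g y)‖ ^ 2
      = ‖x - y‖ ^ 2 - 2 * (α * ⟪x - y, g x - g y⟫_ℝ) + α ^ 2 * ‖g x - g y‖ ^ 2 := by
    rw [norm_sub_sq_real, real_inner_smul_right, norm_smul, Real.norm_eq_abs, mul_pow, sq_abs]
  have hcm : ⟪x - y, g x - g y⟫_ℝ = ⟪g x - g y, x - y⟫_ℝ := real_inner_comm _ _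
  rw [hnt, hcm]
  have hαpos : 0 < α := lt_of_lt_of_le (div_pos two_pos hLμ) hα0
  have h5 : 2 ≤ α * (L + μ) := (div_le_iff₀ hLμ).mp hα0
  have h6 : ‖g x - g y‖ ^ 2 ≤ L ^ 2 * ‖x - y‖ ^ 2 := by
    nlinarith [hsmooth x y, norm_nonneg (g x - g y), norm_nonneg (x - y)]
  have hkxy := hkey x y
  have t1 : 0 ≤ 2 * α * ((L + μ) * ⟪g x - g y, x - y⟫_ℝ
      - (‖g x - g y‖ ^ 2 + μ * L * ‖x - y‖ ^ 2)) :=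
    mul_nonneg (by linarith) (by linarith)
  have t2 : 0 ≤ (α * (L + μ) - 2) * α * (L ^ 2 * ‖x - y‖ ^ 2 - ‖g x - g y‖ ^ 2) :=
    mul_nonneg (mul_nonneg (by linarith) hαpos.le) (by linarith)
  nlinarith [t1, t2, hLμ]
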